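/- Let u, w be integers with u ≥ 2 and w ≥ 2, and let B be the (u+1)×(w+1) real matrix all of whose entries equal 1 except B[1, w+1] = 0 and B[u+1, 1] = 0 (the upper-right and lower-left corners). Then the minimum of N_index(B,Π,Φ) over all contiguous row partitions Π of {1,…,u+1} in which every part has size at most u and all contiguous column partitions Φ of {1,…,w+1} in which every part has size at most w is exactly 3. -/

import Mathlib

open Finset
open scoped Classical

/-- A contiguous partition of `{0, …, m-1}` into `K` nonempty consecutive intervals,
represented by its split points `t 0 = 0 < t 1 < ⋯ < t K = m`; the `k`-th part
(for `0 ≤ k < K`) is the interval `[t k, t (k+1))`. -/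
structure ContigPartition (m : ℕ) where
  K : ℕ
  t : ℕ → ℕ
  t0 : t 0 = 0
  tK : t K = m
  mono : ∀ k < K, t k < t (k + 1)

/-- Block `(k, l)` of `A` (rows from part `k` of `P`, columns from part `l` of `Q`)
contains a nonzero entry of `A`. -/
def blockNonzero {m n : ℕ} (A : Matrix (Fin m) (Fin n) ℝ)
    (P : ContigPartition m) (Q : ContigPartition n) (k l : ℕ) : Prop :=
  ∃ i : Fin m, ∃ j : Fin n,
    P.t k ≤ (i : ℕ) ∧ (i : ℕ) < P.t (k + 1) ∧
    Q.t l ≤ (j : ℕ) ∧ (j : ℕ) < Q.t (l + 1) ∧ A i j ≠ 0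

/-- `N_index(A, P, Q)`: the number of nonzero blocks. -/
noncomputable def Nindex {m n : ℕ} (A : Matrix (Fin m) (Fin n) ℝ)
    (P : ContigPartition m) (Q : ContigPartition n) : ℕ :=
  ((Finset.range P.K ×ˢ Finset.range Q.K).filter
    (fun kl => blockNonzero A P Q kl.1 kl.2)).card

/-- `N_value(A, P, Q)`: the total number of entries in all nonzero blocks. -/
noncomputable def Nvalue {m n : ℕ} (A : Matrix (Fin m) (Fin n) ℝ)
    (P : ContigPartition m) (Q : ContigPartition n) : ℕ :=
  ∑ kl ∈ (Finset.range P.K ×ˢ Finset.range Q.K).filter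
      (fun kl => blockNonzero A P Q kl.1 kl.2),
    (P.t (kl.1 + 1) - P.t kl.1) * (Q.t (kl.2 + 1) - Q.t kl.2)

/-- Split points of a contiguous partition are monotone. -/
lemma ContigPartition.t_le_t {m : ℕ} (P : ContigPartition m) :
    ∀ {a b : ℕ}, a ≤ b → b ≤ P.K → P.t a ≤ P.t b := by
  intro a b hab hbK
  induction b with
  | zero =>
    have : a = 0 := Nat.le_zero.mp hab
    simp [this]
  | succ n ih =>
    rcases Nat.eq_or_lt_of_le hab with h | h
    · simp [h]
    · have h1 : a ≤ n := Nat.lt_succ_iff.mp h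
      have h2 : n ≤ P.K := Nat.le_of_succ_le hbK
      exact le_trans (ih h1 h2) (le_of_lt (P.mono n hbK))

/-- For the `(u+1) × (w+1)` gadget matrix that is all nonzero except its
upper-right and lower-left corner entries, the minimum number of nonzero blocks
over all contiguous row partitions with parts of size at most `u` and column
partitions with parts of size at most `w` is exactly `3`. -/
theorem gadget_B1_min_blocks (u w : ℕ) (hu : 2 ≤ u) (hw : 2 ≤ w)
    (B : Matrix (Fin (u + 1)) (Fin (w + 1)) ℝ)
    (hB : ∀ (i : Fin (u + 1)) (j : Fin (w + 1)),
      B i j = if ((i : ℕ) = 0 ∧ (j : ℕ) = w) ∨ ((i : ℕ) = u ∧ (j : ℕ) = 0)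
        then 0 else 1) :
    IsLeast { x : ℕ | ∃ (P : ContigPartition (u + 1)) (Q : ContigPartition (w + 1)),
        (∀ k < P.K, P.t (k + 1) - P.t k ≤ u) ∧
        (∀ l < Q.K, Q.t (l + 1) - Q.t l ≤ w) ∧
        Nindex B P Q = x } 3 := by
  have hBne : ∀ (i : Fin (u + 1)) (j : Fin (w + 1)),
      ¬(((i : ℕ) = 0 ∧ (j : ℕ) = w) ∨ ((i : ℕ) = u ∧ (j : ℕ) = 0)) → B i j ≠ 0 := by
    intro i j h
    rw [hB, if_neg h]
    norm_num
  constructor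
  · -- membership: the partition P = {0} ∪ [1,u], Q = [0,w-1] ∪ {w} gives 3 blocks
    refine ⟨⟨2, fun k => if k = 0 then 0 else if k = 1 then 1 else u + 1, by simp, by simp, ?_⟩,
            ⟨2, fun l => if l = 0 then 0 else if l = 1 then w else w + 1, by simp, by simp, ?_⟩,
            ?_, ?_, ?_⟩
    · intro k hk
      interval_cases k <;> simp <;> omega
    · intro l hl
      interval_cases l <;> simp <;> omega
    · intro k hk
      interval_cases k <;> simp <;> omega
    · intro l hl
      interval_cases l <;> simp <;> omega
    · -- compute Nindex = 3
      set P : ContigPartition (u + 1) :=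
        ⟨2, fun k => if k = 0 then 0 else if k = 1 then 1 else u + 1, by simp, by simp, by
          intro k hk; interval_cases k <;> simp <;> omega⟩ with hP
      set Q : ContigPartition (w + 1) :=
        ⟨2, fun l => if l = 0 then 0 else if l = 1 then w else w + 1, by simp, by simp, by
          intro l hl; interval_cases l <;> simp <;> omega⟩ with hQ
      have hPt : ∀ k, P.t k = if k = 0 then 0 else if k = 1 then 1 else u + 1 := fun _ => rfl
      have hQt : ∀ l, Q.t l = if l = 0 then 0 else if l = 1 then w else w + 1 := fun _ => rfl
      have h00 : blockNonzero B P Q 0 0 := by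
        refine ⟨⟨0, by omega⟩, ⟨0, by omega⟩, ?_, ?_, ?_, ?_, ?_⟩
        · simp [hPt]
        · simp [hPt]
        · simp [hQt]
        · simp [hQt]; omega
        · apply hBne; simp; omega
      have h01 : ¬ blockNonzero B P Q 0 1 := by
        rintro ⟨i, j, hi1, hi2, hj1, hj2, hne⟩
        simp [hPt] at hi2
        simp [hQt] at hj1 hj2
        apply hne
        rw [hB, if_pos]
        left
        exact ⟨by simp [hi2], by omega⟩
      have h10 : blockNonzero B P Q 1 0 := by
        refine ⟨⟨1, by omega⟩, ⟨0, by omega⟩, ?_, ?_, ?_, ?_, ?_⟩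
        · simp [hPt]
        · simp [hPt]; omega
        · simp [hQt]
        · simp [hQt]; omega
        · apply hBne; simp; omega
      have h11 : blockNonzero B P Q 1 1 := by
        refine ⟨⟨1, by omega⟩, ⟨w, by omega⟩, ?_, ?_, ?_, ?_, ?_⟩
        · simp [hPt]
        · simp [hPt]; omega
        · simp [hQt]
        · simp [hQt]
        · apply hBne; simp; omega
      have hrange : (Finset.range P.K ×ˢ Finset.range Q.K) =
          ({(0,0), (0,1), (1,0), (1,1)} : Finset (ℕ × ℕ)) := by
        show (Finset.range 2 ×ˢ Finset.range 2) = _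
        decide
      unfold Nindex
      rw [hrange]
      rw [filter_insert, if_pos h00, filter_insert, if_neg h01, filter_insert, if_pos h10,
        filter_singleton, if_pos h11]
      decide
  · -- lower bound
    rintro x ⟨P, Q, hPu, hQw, rfl⟩
    have hPt0 := P.t0
    have hPtK := P.tK
    have hQt0 := Q.t0
    have hQtK := Q.tK
    -- P.K ≥ 2 and Q.K ≥ 2
    have hK2 : 2 ≤ P.K := by
      by_contra h
      push_neg at h
      have h' : P.K = 0 ∨ P.K = 1 := by omega
      rcases h' with h' | h'
      · rw [h', hPt0] at hPtK; omega
      · have h2 := hPu 0 (by omega)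
        rw [h'] at hPtK
        norm_num at h2
        omega
    have hL2 : 2 ≤ Q.K := by
      by_contra h
      push_neg at h
      have h' : Q.K = 0 ∨ Q.K = 1 := by omega
      rcases h' with h' | h'
      · rw [h', hQt0] at hQtK; omega
      · have h2 := hQw 0 (by omega)
        rw [h'] at hQtK
        norm_num at h2
        omega
    have hK1 : P.K - 1 + 1 = P.K := by omega
    have hL1 : Q.K - 1 + 1 = Q.K := by omega
    have hPtK1 : P.t (P.K - 1) < u + 1 := by
      have := P.mono (P.K - 1) (by omega)
      rw [hK1] at this
      omega
    have hQtL1 : Q.t (Q.K - 1) < w + 1 := by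
      have := Q.mono (Q.K - 1) (by omega)
      rw [hL1] at this
      omega
    set s := ((Finset.range P.K ×ˢ Finset.range Q.K).filter
      (fun kl => blockNonzero B P Q kl.1 kl.2)) with hs
    have mem_s : ∀ k l, k < P.K → l < Q.K → blockNonzero B P Q k l → (k, l) ∈ s := by
      intro k l hk hl hb
      simp only [hs, mem_filter, mem_product, mem_range]
      exact ⟨⟨hk, hl⟩, hb⟩
    -- block (0,0)
    have hb00 : ((0 : ℕ), (0 : ℕ)) ∈ s := by
      apply mem_s 0 0 (by omega) (by omega)
      refine ⟨⟨0, by omega⟩, ⟨0, by omega⟩, ?_, ?_, ?_, ?_, ?_⟩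
      · simp [hPt0]
      · have := P.mono 0 (by omega); simpa [hPt0] using this
      · simp [hQt0]
      · have := Q.mono 0 (by omega); simpa [hQt0] using this
      · apply hBne; simp; omega
    -- block (K-1, L-1)
    have hbKL : ((P.K - 1 : ℕ), (Q.K - 1 : ℕ)) ∈ s := by
      apply mem_s _ _ (by omega) (by omega)
      refine ⟨⟨u, by omega⟩, ⟨w, by omega⟩, ?_, ?_, ?_, ?_, ?_⟩
      · simpa using Nat.lt_succ_iff.mp hPtK1
      · rw [hK1, hPtK]; simp
      · simpa using Nat.lt_succ_iff.mp hQtL1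
      · rw [hL1, hQtK]; simp
      · apply hBne; simp; omega
    -- a third block, distinct from the two above
    obtain ⟨c, hc_mem, hc1, hc2⟩ :
        ∃ c, c ∈ s ∧ c ≠ ((0 : ℕ), (0 : ℕ)) ∧ c ≠ ((P.K - 1 : ℕ), (Q.K - 1 : ℕ)) := by
      rcases Nat.lt_or_ge (Q.t (Q.K - 1)) w with hlt | hge
      · -- last column part has ≥ 2 columns : block (0, L-1)
        refine ⟨(0, Q.K - 1), ?_, ?_, ?_⟩
        · apply mem_s 0 (Q.K - 1) (by omega) (by omega)
          refine ⟨⟨0, by omega⟩, ⟨Q.t (Q.K - 1), by omega⟩, ?_, ?_, ?_, ?_, ?_⟩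
          · simp [hPt0]
          · have := P.mono 0 (by omega); simpa [hPt0] using this
          · simp
          · show Q.t (Q.K - 1) < Q.t (Q.K - 1 + 1)
            rw [hL1, hQtK]; exact hQtL1
          · apply hBne; simp; omega
        · simp only [ne_eq, Prod.mk.injEq, not_and]; omega
        · simp only [ne_eq, Prod.mk.injEq, not_and]; omega
      · -- last column part is {w}
        have hQw1 : Q.t (Q.K - 1) = w := by omega
        have hQ1pos : 1 ≤ Q.t 1 := by
          have h := Q.mono 0 (by omega)
          norm_num at h
          omega
        rcases Nat.lt_or_ge 1 (Q.t 1) with h2 | h2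
        · -- first column part has ≥ 2 columns : block (K-1, 0)
          refine ⟨(P.K - 1, 0), ?_, ?_, ?_⟩
          · apply mem_s (P.K - 1) 0 (by omega) (by omega)
            refine ⟨⟨u, by omega⟩, ⟨1, by omega⟩, ?_, ?_, ?_, ?_, ?_⟩
            · simpa using Nat.lt_succ_iff.mp hPtK1
            · rw [hK1, hPtK]; simp
            · simp [hQt0]
            · simpa using h2
            · apply hBne; simp; omega
          · simp only [ne_eq, Prod.mk.injEq, not_and]; omega
          · simp only [ne_eq, Prod.mk.injEq, not_and]; omega
        · -- first column part = {0}, last = {w} : block (0, 1)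
          have hQt1 : Q.t 1 = 1 := by omega
          have hL3 : 3 ≤ Q.K := by
            by_contra h
            push_neg at h
            have : Q.K = 2 := by omega
            rw [this] at hQw1
            simp at hQw1
            omega
          refine ⟨(0, 1), ?_, ?_, ?_⟩
          · apply mem_s 0 1 (by omega) (by omega)
            refine ⟨⟨0, by omega⟩, ⟨1, by omega⟩, ?_, ?_, ?_, ?_, ?_⟩
            · simp [hPt0]
            · have := P.mono 0 (by omega); simpa [hPt0] using this
            · simp [hQt1]
            · have := Q.mono 1 (by omega); simpa [hQt1] using this
            · apply hBne; simp; omega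
          · simp only [ne_eq, Prod.mk.injEq, not_and]; omega
          · simp only [ne_eq, Prod.mk.injEq, not_and]; omega
    -- three distinct elements give card ≥ 3
    have hne12 : ((0 : ℕ), (0 : ℕ)) ≠ ((P.K - 1 : ℕ), (Q.K - 1 : ℕ)) := by
      simp only [ne_eq, Prod.mk.injEq, not_and]
      omega
    have hsub : ({((0 : ℕ), (0 : ℕ)), ((P.K - 1 : ℕ), (Q.K - 1 : ℕ)), c} : Finset (ℕ × ℕ)) ⊆ s := by
      intro y hy
      simp only [mem_insert, mem_singleton] at hy
      rcases hy with rfl | rfl | rfl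
      · exact hb00
      · exact hbKL
      · exact hc_mem
    have hcard : ({((0 : ℕ), (0 : ℕ)), ((P.K - 1 : ℕ), (Q.K - 1 : ℕ)), c} : Finset (ℕ × ℕ)).card = 3 := by
      rw [card_insert_of_notMem, card_insert_of_notMem, card_singleton]
      · simp [hc2.symm]
      · simp only [mem_insert, mem_singleton]
        push_neg
        exact ⟨hne12, hc1.symm⟩
    calc (3 : ℕ) = ({((0 : ℕ), (0 : ℕ)), ((P.K - 1 : ℕ), (Q.K - 1 : ℕ)), c} : Finset (ℕ × ℕ)).card :=
          hcard.symm
      _ ≤ s.card := card_le_card hsub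
      _ = Nindex B P Q := rfl
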